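/- For fixed real numbers m < M and x₃ with m < x₃ ≤ M, and any value σ ∈ (0, 1], the cubic equation [(1-2a(M-x₃))/(1-2a(M-m))]² · (1-4a(M-m))/(1-4a(M-x₃)) = σ has a unique solution a in the interval [0, 1/(4(M-m))). -/

import Mathlib

set_option maxHeartbeats 1000000 in
private lemma key (c d : ℝ) (hc : 0 < c) (hd0 : 0 ≤ d) (hdc : d < c)
    (σ : ℝ) (hσ0 : 0 < σ) (hσ1 : σ ≤ 1) :
    ∃! a : ℝ, a ∈ Set.Ico 0 (1/(4*c)) ∧
      ((1 - 2*a*d) / (1 - 2*a*c))^2 * ((1 - 4*a*c) / (1 - 4*a*d)) = σ := by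
  set b : ℝ := 1/(4*c) with hb
  have hbpos : 0 < b := by positivity
  set F : ℝ → ℝ := fun a => ((1 - 2*d*a)^2 * (1 - 4*c*a)) / ((1 - 2*c*a)^2 * (1 - 4*d*a))
    with hF
  -- basic bounds on Icc 0 b
  have bounds : ∀ a ∈ Set.Icc 0 b, (1:ℝ)/2 ≤ 1 - 2*c*a ∧ 1 - 2*c*a ≤ 1 - 2*d*a ∧
      0 < 1 - 4*d*a ∧ 0 ≤ 1 - 4*c*a := by
    intro a ha
    obtain ⟨ha0, hab⟩ := ha
    have hca : c * a ≤ 1/4 := by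
      have := mul_le_mul_of_nonneg_left hab hc.le
      rw [hb] at this
      calc c * a ≤ c * (1/(4*c)) := this
        _ = 1/4 := by field_simp
    have hda : d * a ≤ c * a := mul_le_mul_of_nonneg_right hdc.le ha0
    have hda' : 4 * (d*a) < 1 := by
      rcases eq_or_lt_of_le hd0 with h | h
      · nlinarith
      · have : d * a ≤ d * (1/(4*c)) := mul_le_mul_of_nonneg_left hab h.le
        have h2 : d * (1/(4*c)) < 1/4 := by
          rw [mul_one_div, div_lt_iff₀ (by positivity)]
          nlinarith
        nlinarith
    refine ⟨by nlinarith, by nlinarith, by nlinarith, by nlinarith⟩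
  have hDen : ∀ a ∈ Set.Icc 0 b, (1 - 2*c*a)^2 * (1 - 4*d*a) ≠ 0 := by
    intro a ha
    obtain ⟨h1, h2, h3, h4⟩ := bounds a ha
    positivity
  -- F is continuous on Icc 0 b
  have hcont : ContinuousOn F (Set.Icc 0 b) := by
    apply ContinuousOn.div
    · fun_prop
    · fun_prop
    · exact hDen
  -- derivative of F
  have hderiv : ∀ a ∈ Set.Ioo 0 b, HasDerivAt F
      (((((2*(1 - 2*d*a)^1 * -(2*d)) * (1 - 4*c*a) + (1 - 2*d*a)^2 * -(4*c)) *
          ((1 - 2*c*a)^2 * (1 - 4*d*a)) -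
        ((1 - 2*d*a)^2 * (1 - 4*c*a)) *
          ((2*(1 - 2*c*a)^1 * -(2*c)) * (1 - 4*d*a) + (1 - 2*c*a)^2 * -(4*d)))) /
        (((1 - 2*c*a)^2 * (1 - 4*d*a))^2)) a := by
    intro a ha
    have hA : HasDerivAt (fun x : ℝ => 1 - 2*d*x) (-(2*d)) a := by
      simpa using ((hasDerivAt_id a).const_mul (2*d)).const_sub 1
    have hB : HasDerivAt (fun x : ℝ => 1 - 4*c*x) (-(4*c)) a := by
      simpa using ((hasDerivAt_id a).const_mul (4*c)).const_sub 1
    have hC : HasDerivAt (fun x : ℝ => 1 - 2*c*x) (-(2*c)) a := by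
      simpa using ((hasDerivAt_id a).const_mul (2*c)).const_sub 1
    have hD : HasDerivAt (fun x : ℝ => 1 - 4*d*x) (-(4*d)) a := by
      simpa using ((hasDerivAt_id a).const_mul (4*d)).const_sub 1
    exact ((hA.pow 2).mul hB).div ((hC.pow 2).mul hD)
      (hDen a ⟨ha.1.le, ha.2.le⟩)
  -- derivative negative on interior
  have hneg : ∀ a ∈ Set.Ioo 0 b, deriv F a < 0 := by
    intro a ha
    obtain ⟨h1, h2, h3, h4⟩ := bounds a ⟨ha.1.le, ha.2.le⟩
    have h4' : 0 < 1 - 4*c*a := by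
      have : c * a < c * b := mul_lt_mul_of_pos_left ha.2 hc
      have hcb : c * b = 1/4 := by rw [hb]; field_simp
      nlinarith
    rw [(hderiv a ha).deriv]
    apply div_neg_of_neg_of_pos
    · have fact : ((2*(1 - 2*d*a)^1 * -(2*d)) * (1 - 4*c*a) + (1 - 2*d*a)^2 * -(4*c)) *
          ((1 - 2*c*a)^2 * (1 - 4*d*a)) -
        ((1 - 2*d*a)^2 * (1 - 4*c*a)) *
          ((2*(1 - 2*c*a)^1 * -(2*c)) * (1 - 4*d*a) + (1 - 2*c*a)^2 * -(4*d)) =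
        -8*a*(1 - 2*d*a)*(1 - 2*c*a) *
          (c^2*((1 - 2*d*a)*(1 - 4*d*a)) - d^2*((1 - 2*c*a)*(1 - 4*c*a))) := by ring
      rw [fact]
      have hQP : (1 - 2*c*a)*(1 - 4*c*a) ≤ (1 - 2*d*a)*(1 - 4*d*a) := by nlinarith
      have hP : 0 < (1 - 2*c*a)*(1 - 4*c*a) := by nlinarith
      have hbr : 0 < c^2*((1 - 2*d*a)*(1 - 4*d*a)) - d^2*((1 - 2*c*a)*(1 - 4*c*a)) := by
        have hc2 : d^2 < c^2 := by nlinarith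
        have t1 : c^2*((1 - 2*c*a)*(1 - 4*c*a)) ≤ c^2*((1 - 2*d*a)*(1 - 4*d*a)) :=
          mul_le_mul_of_nonneg_left hQP (sq_nonneg c)
        have t2 : d^2*((1 - 2*c*a)*(1 - 4*c*a)) < c^2*((1 - 2*c*a)*(1 - 4*c*a)) :=
          mul_lt_mul_of_pos_right hc2 hP
        linarith
      nlinarith [mul_pos (mul_pos (mul_pos ha.1 (show (0:ℝ) < 1-2*d*a by linarith))
        (show (0:ℝ) < 1-2*c*a by linarith)) hbr]
    · have : (0:ℝ) < (1 - 2*c*a)^2 * (1 - 4*d*a) := by positivity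
      positivity
  have hanti : StrictAntiOn F (Set.Icc 0 b) := by
    apply strictAntiOn_of_deriv_neg (convex_Icc 0 b) hcont
    intro x hx
    rw [interior_Icc] at hx
    exact hneg x hx
  -- endpoint values
  have hF0 : F 0 = 1 := by simp [hF]
  have hFb : F b = 0 := by
    have : 1 - 4*c*b = 0 := by rw [hb]; field_simp; ring
    simp [hF, this]
  -- equivalence of the two expressions on Icc
  have heq : ∀ a ∈ Set.Icc 0 b,
      ((1 - 2*a*d) / (1 - 2*a*c))^2 * ((1 - 4*a*c) / (1 - 4*a*d)) = F a := by
    intro a ha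
    obtain ⟨h1, h2, h3, h4⟩ := bounds a ha
    have hc1 : (1 - 2*a*c) ≠ 0 := by nlinarith
    have hd1 : (1 - 4*a*d) ≠ 0 := by nlinarith
    rw [hF]
    field_simp
  -- existence via IVT
  have hmem : σ ∈ Set.Icc (F b) (F 0) := by rw [hF0, hFb]; exact ⟨hσ0.le, hσ1⟩
  obtain ⟨a₀, ha₀, hFa₀⟩ := intermediate_value_Icc' hbpos.le hcont hmem
  have ha₀b : a₀ ≠ b := by
    intro h; rw [h, hFb] at hFa₀; linarith [hFa₀ ▸ hσ0]
  have ha₀Ico : a₀ ∈ Set.Ico 0 b := ⟨ha₀.1, lt_of_le_of_ne ha₀.2 ha₀b⟩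
  refine ⟨a₀, ⟨ha₀Ico, by rw [heq a₀ ha₀]; exact hFa₀⟩, ?_⟩
  rintro y ⟨hy, hyeq⟩
  have hyIcc : y ∈ Set.Icc 0 b := ⟨hy.1, hy.2.le⟩
  have hy' : F y = σ := by rw [← heq y hyIcc]; exact hyeq
  exact hanti.injOn hyIcc ha₀ (by rw [hy', hFa₀])

theorem stmt1 (m M x₃ σ : ℝ) (hmM : m < M) (hx₃m : m < x₃) (hx₃M : x₃ ≤ M)
    (hσ0 : 0 < σ) (hσ1 : σ ≤ 1) :
    ∃! a : ℝ, a ∈ Set.Ico 0 (1/(4*(M - m))) ∧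
      ((1 - 2*a*(M - x₃)) / (1 - 2*a*(M - m)))^2 *
        ((1 - 4*a*(M - m)) / (1 - 4*a*(M - x₃))) = σ := by
  exact key (M - m) (M - x₃) (by linarith) (by linarith) (by linarith) σ hσ0 hσ1
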